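/- For every real λ ≠ 0, the function ĝ(x) = ln( (1 − e^{(x+1)λ}) / (1 − e^{λ}) ) is well defined (the argument of the logarithm is positive) and concave on [0, ∞). -/

import Mathlib

open Real Set

lemma ghat_aux_ne (lam : ℝ) (hlam : lam ≠ 0) {x : ℝ} (hx : 0 ≤ x) :
    1 - Real.exp ((x + 1) * lam) ≠ 0 := by
  have hne : (x + 1) * lam ≠ 0 := mul_ne_zero (by linarith) hlam
  intro h
  have h2 : Real.exp ((x + 1) * lam) = 1 := by linarith
  rw [Real.exp_eq_one_iff] at h2
  exact hne h2

lemma ghat_pos (lam : ℝ) (hlam : lam ≠ 0) {x : ℝ} (hx : 0 ≤ x) :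
    0 < (1 - Real.exp ((x + 1) * lam)) / (1 - Real.exp lam) := by
  rcases lt_or_gt_of_ne hlam with h | h
  · have h1 : Real.exp ((x + 1) * lam) < 1 := by
      rw [Real.exp_lt_one_iff]
      exact mul_neg_of_pos_of_neg (by linarith) h
    have h2 : Real.exp lam < 1 := Real.exp_lt_one_iff.mpr h
    exact div_pos (by linarith) (by linarith)
  · have h1 : 1 < Real.exp ((x + 1) * lam) := by
      rw [Real.one_lt_exp_iff] <;> nlinarith
    have h2 : 1 < Real.exp lam := by rw [Real.one_lt_exp_iff] <;> linarith
    exact div_pos_of_neg_of_neg (by linarith) (by linarith)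

/-- For every real `λ ≠ 0`, the function
`ĝ(x) = ln((1 − e^{(x+1)λ}) / (1 − e^{λ}))` is well defined (the argument of the
logarithm is positive for `x ≥ 0`) and concave on `[0, ∞)`. -/
theorem ghat_wellDefined_and_concave (lam : ℝ) (hlam : lam ≠ 0) :
    (∀ x : ℝ, 0 ≤ x →
      0 < (1 - Real.exp ((x + 1) * lam)) / (1 - Real.exp lam)) ∧
    ConcaveOn ℝ (Set.Ici (0 : ℝ))
      (fun x : ℝ => Real.log ((1 - Real.exp ((x + 1) * lam)) / (1 - Real.exp lam))) := by
  refine ⟨fun x hx => ghat_pos lam hlam hx, ?_⟩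
  have hden : (1 : ℝ) - Real.exp lam ≠ 0 := by
    intro h
    have h2 : Real.exp lam = 1 := by linarith
    rw [Real.exp_eq_one_iff] at h2
    exact hlam h2
  set E : ℝ → ℝ := fun x => Real.exp ((x + 1) * lam) with hE
  have hEderiv : ∀ x : ℝ, HasDerivAt E (lam * E x) x := by
    intro x
    have h1 : HasDerivAt (fun x : ℝ => (x + 1) * lam) lam x := by
      simpa using ((hasDerivAt_id x).add_const 1).mul_const lam
    simpa [hE, mul_comm] using h1.exp
  refine concaveOn_of_hasDerivWithinAt2_nonpos (convex_Ici 0) ?_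
    (f' := fun x => (-(lam * E x)) / (1 - E x))
    (f'' := fun x => (-(lam ^ 2 * E x)) / (1 - E x) ^ 2) ?_ ?_ ?_
  · -- continuity
    apply ContinuousOn.log
    · exact (Continuous.div_const (by continuity) _).continuousOn
    · intro x hx
      exact ne_of_gt (ghat_pos lam hlam hx)
  · -- first derivative
    intro x hx
    rw [interior_Ici] at hx
    have hx0 : (0 : ℝ) ≤ x := le_of_lt hx
    have hne : 1 - E x ≠ 0 := ghat_aux_ne lam hlam hx0
    have hv : HasDerivAt (fun x => (1 - E x) / (1 - Real.exp lam))
        ((-(lam * E x)) / (1 - Real.exp lam)) x := by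
      exact (((hEderiv x).const_sub 1).div_const _)
    have hvne : (1 - E x) / (1 - Real.exp lam) ≠ 0 := ne_of_gt (ghat_pos lam hlam hx0)
    have := hv.log hvne
    have heq : (-(lam * E x)) / (1 - Real.exp lam) / ((1 - E x) / (1 - Real.exp lam))
        = (-(lam * E x)) / (1 - E x) := by
      field_simp
    rw [heq] at this
    exact this.hasDerivWithinAt
  · -- second derivative
    intro x hx
    rw [interior_Ici] at hx
    have hne : 1 - E x ≠ 0 := ghat_aux_ne lam hlam (le_of_lt hx)
    have hn : HasDerivAt (fun x => -(lam * E x)) (-(lam * (lam * E x))) x := by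
      exact ((hEderiv x).const_mul lam).neg
    have hd : HasDerivAt (fun x => 1 - E x) (-(lam * E x)) x := (hEderiv x).const_sub 1
    have := hn.div hd hne
    have heq : (-(lam * (lam * E x)) * (1 - E x) - -(lam * E x) * -(lam * E x)) / (1 - E x) ^ 2
        = (-(lam ^ 2 * E x)) / (1 - E x) ^ 2 := by
      field_simp
      ring
    rw [heq] at this
    exact this.hasDerivWithinAt
  · -- nonpositivity
    intro x hx
    apply div_nonpos_of_nonpos_of_nonneg
    · have : 0 < E x := Real.exp_pos _
      nlinarith
    · positivity
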